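/- Let N be a nonempty finite index set, let C > 0 be real, let p : N → ℝ satisfy 0 < p(j) < C for all j ∈ N, and let s, t : N → ℝ take values in {0, 1}. Let A = {j ∈ N : s(j) = 1 and t(j) = 0}. Then max(0, max_{j ∈ N} (p(j) − C·(1 − s(j) + t(j)))) equals max_{j ∈ A} p(j) if A is nonempty, and equals 0 if A is empty. -/

import Mathlib

open scoped Classical

/-- **The DFS highest-priority-unvisited-neighbor computation `lfu`.**
Let `N` be a nonempty finite index set, `C > 0`, let `p : N → ℝ` satisfy
`0 < p j < C` on `N`, and let `s, t : N → ℝ` take values in `{0, 1}`.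
Let `A = {j ∈ N : s j = 1 ∧ t j = 0}`. Then
`max 0 (max_{j ∈ N} (p j − C·(1 − s j + t j)))` equals `max_{j ∈ A} p j`
if `A` is nonempty, and equals `0` if `A` is empty. -/
theorem dfs_lfu_spec
    (ι : Type) (N : Finset ι) (hN : N.Nonempty)
    (C : ℝ) (hC : 0 < C)
    (p : ι → ℝ) (hp : ∀ j ∈ N, 0 < p j ∧ p j < C)
    (s t : ι → ℝ)
    (hs : ∀ j ∈ N, s j = 0 ∨ s j = 1) (ht : ∀ j ∈ N, t j = 0 ∨ t j = 1) :
    (∀ hA : (N.filter fun j => s j = 1 ∧ t j = 0).Nonempty,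
      max 0 (N.sup' hN fun j => p j - C * (1 - s j + t j)) =
        (N.filter fun j => s j = 1 ∧ t j = 0).sup' hA p) ∧
    ((N.filter fun j => s j = 1 ∧ t j = 0) = ∅ →
      max 0 (N.sup' hN fun j => p j - C * (1 - s j + t j)) = 0) := by
  set f : ι → ℝ := fun j => p j - C * (1 - s j + t j) with hf
  have hin : ∀ j ∈ N, (s j = 1 ∧ t j = 0) → f j = p j := by
    intro j _ ⟨h1, h2⟩
    simp [hf, h1, h2]
  have hout : ∀ j ∈ N, ¬(s j = 1 ∧ t j = 0) → f j < 0 := by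
    intro j hj hnot
    have hsj := hs j hj
    have htj := ht j hj
    have h1 : (1 : ℝ) ≤ 1 - s j + t j := by
      rcases hsj with h | h <;> rcases htj with h' | h' <;>
        simp [h, h'] at hnot ⊢ <;> nlinarith
    have h2 := (hp j hj).2
    have h3 : C ≤ C * (1 - s j + t j) := by nlinarith
    simp only [hf]
    linarith
  constructor
  · intro hA
    obtain ⟨j0, hj0⟩ := hA
    simp only [Finset.mem_filter] at hj0
    have hposA : 0 < (N.filter fun j => s j = 1 ∧ t j = 0).sup' ⟨j0, by
        simp [Finset.mem_filter, hj0.1, hj0.2]⟩ p := by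
      refine lt_of_lt_of_le (hp j0 hj0.1).1 ?_
      exact Finset.le_sup' p (by simp [Finset.mem_filter, hj0.1, hj0.2])
    have hsup_pos : 0 < N.sup' hN f := by
      refine lt_of_lt_of_le ?_ (Finset.le_sup' f hj0.1)
      rw [hin j0 hj0.1 hj0.2]
      exact (hp j0 hj0.1).1
    rw [max_eq_right hsup_pos.le]
    apply le_antisymm
    · rw [Finset.sup'_le_iff]
      intro j hj
      by_cases hc : s j = 1 ∧ t j = 0
      · rw [hin j hj hc]
        exact Finset.le_sup' p (by simp [Finset.mem_filter, hj, hc])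
      · exact le_of_lt (lt_trans (hout j hj hc) hposA)
    · refine Finset.sup'_le _ _ ?_
      intro j hj
      simp only [Finset.mem_filter] at hj
      rw [← hin j hj.1 hj.2]
      exact Finset.le_sup' f hj.1
  · intro hempty
    have : N.sup' hN f < 0 := by
      rw [Finset.sup'_lt_iff]
      intro j hj
      refine hout j hj fun hc => ?_
      have : j ∈ N.filter fun j => s j = 1 ∧ t j = 0 := by
        simp [Finset.mem_filter, hj, hc]
      simp [hempty] at this
    exact max_eq_left this.le
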